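/- Given a finite Markov chain M with initial state, a positive integer k, and λ ∈ (0,1], for any Markov chain N' with at most k states there exists a Markov chain N with at most k states whose labels are all taken from L(M) such that d_λ(M,N) ≤ d_λ(M,N'). -/
import Mathlib


open Finset

def IsDist {X : Type*} [Fintype X] (μ : X → ℝ) : Prop :=
  (∀ x, 0 ≤ μ x) ∧ ∑ x, μ x = 1

def IsCoupling {X : Type*} [Fintype X] (μ ν : X → ℝ) (ω : X × X → ℝ) : Prop :=
  IsDist ω ∧ (∀ x, ∑ y, ω (x, y) = μ x) ∧ (∀ y, ∑ x, ω (x, y) = ν y)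

noncomputable def kant {X : Type*} [Fintype X] (d : X → X → ℝ) (μ ν : X → ℝ) : ℝ :=
  sInf { c | ∃ ω : X × X → ℝ, IsCoupling μ ν ω ∧ c = ∑ p : X × X, d p.1 p.2 * ω p }

open Classical in
noncomputable def psi {S L : Type*} [Fintype S] (lam : ℝ) (T : S → S → ℝ) (lab : S → L)
    (d : S → S → ℝ) : S → S → ℝ :=
  fun s t => if lab s = lab t then lam * kant d (T s) (T t) else 1

noncomputable def bdist {S L : Type*} [Fintype S] (lam : ℝ) (T : S → S → ℝ) (lab : S → L) :
    S → S → ℝ := fun s t =>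
  sInf { r | ∃ d : S → S → ℝ, (∀ a b, 0 ≤ d a b ∧ d a b ≤ 1) ∧
      (∀ a b, psi lam T lab d a b ≤ d a b) ∧ r = d s t }

def sumT {M N : Type*} (τ : M → M → ℝ) (θ : N → N → ℝ) : M ⊕ N → M ⊕ N → ℝ
  | Sum.inl m, Sum.inl m' => τ m m'
  | Sum.inr n, Sum.inr n' => θ n n'
  | _, _ => 0

def sumL {M N L : Type*} (ℓ : M → L) (α : N → L) : M ⊕ N → L
  | Sum.inl m => ℓ m
  | Sum.inr n => α n

lemma kant_le_one {X : Type*} [Fintype X] {d : X → X → ℝ} {μ ν : X → ℝ}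
    (hd : ∀ a b, 0 ≤ d a b ∧ d a b ≤ 1) (hμ : IsDist μ) (hν : IsDist ν) :
    kant d μ ν ≤ 1 := by
  have hbdd : BddBelow
      {c | ∃ ω : X × X → ℝ, IsCoupling μ ν ω ∧ c = ∑ p : X × X, d p.1 p.2 * ω p} := by
    refine ⟨0, fun c hc => ?_⟩
    obtain ⟨ω, hω, rfl⟩ := hc
    exact Finset.sum_nonneg fun p _ => mul_nonneg (hd _ _).1 (hω.1.1 p)
  have hcoupl : IsCoupling μ ν (fun p => μ p.1 * ν p.2) := by
    refine ⟨⟨fun p => mul_nonneg (hμ.1 p.1) (hν.1 p.2), ?_⟩, fun x => ?_, fun y => ?_⟩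
    · rw [Fintype.sum_prod_type]
      simp only [← Finset.mul_sum, hν.2, mul_one]
      exact hμ.2
    · simp only [← Finset.mul_sum, hν.2, mul_one]
    · simp only [← Finset.sum_mul, hμ.2, one_mul]
  have hmem : (∑ p : X × X, d p.1 p.2 * (μ p.1 * ν p.2)) ∈
      {c | ∃ ω : X × X → ℝ, IsCoupling μ ν ω ∧ c = ∑ p : X × X, d p.1 p.2 * ω p} :=
    ⟨fun p => μ p.1 * ν p.2, hcoupl, rfl⟩
  have h1 : (∑ p : X × X, d p.1 p.2 * (μ p.1 * ν p.2)) ≤ 1 := by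
    calc (∑ p : X × X, d p.1 p.2 * (μ p.1 * ν p.2))
        ≤ ∑ p : X × X, 1 * (μ p.1 * ν p.2) := by
          refine Finset.sum_le_sum fun p _ => ?_
          exact mul_le_mul_of_nonneg_right (hd _ _).2 (mul_nonneg (hμ.1 p.1) (hν.1 p.2))
      _ = 1 := by
          simp only [one_mul]
          rw [Fintype.sum_prod_type]
          simp only [← Finset.mul_sum, hν.2, mul_one]
          exact hμ.2
  exact le_trans (csInf_le hbdd hmem) h1

lemma sumT_isDist {M N : Type*} [Fintype M] [Fintype N]
    {τ : M → M → ℝ} {θ : N → N → ℝ} (hτ : ∀ m, IsDist (τ m)) (hθ : ∀ n, IsDist (θ n)) :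
    ∀ s : M ⊕ N, IsDist (sumT τ θ s) := by
  intro s
  cases s with
  | inl m =>
      refine ⟨fun x => ?_, ?_⟩
      · cases x with
        | inl m' => exact (hτ m).1 m'
        | inr n' => exact le_refl 0
      · rw [Fintype.sum_sum_type]
        simp only [sumT]
        rw [(hτ m).2]
        simp
  | inr n =>
      refine ⟨fun x => ?_, ?_⟩
      · cases x with
        | inl m' => exact le_refl 0
        | inr n' => exact (hθ n).1 n'
      · rw [Fintype.sum_sum_type]
        simp only [sumT]
        rw [(hθ n).2]
        simp

theorem stmt10 {M L : Type*} [Fintype M] [Nonempty M] (k : ℕ) (hk : 0 < k)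
    (lam : ℝ) (hlam : 0 < lam ∧ lam ≤ 1)
    (τ : M → M → ℝ) (hτ : ∀ m, IsDist (τ m)) (ℓ : M → L) (m0 : M)
    (θ' : Fin k → Fin k → ℝ) (hθ' : ∀ i, IsDist (θ' i)) (α' : Fin k → L) (n0 : Fin k) :
    ∃ (θ : Fin k → Fin k → ℝ) (α : Fin k → L),
      (∀ i, IsDist (θ i)) ∧ (∀ i, α i ∈ Set.range ℓ) ∧
      bdist lam (sumT τ θ) (sumL ℓ α) (Sum.inl m0) (Sum.inr n0)
        ≤ bdist lam (sumT τ θ') (sumL ℓ α') (Sum.inl m0) (Sum.inr n0) := by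
  classical
  set α : Fin k → L := fun i => if α' i ∈ Set.range ℓ then α' i else ℓ m0 with hα
  refine ⟨θ', α, hθ', fun i => ?_, ?_⟩
  · show (if α' i ∈ Set.range ℓ then α' i else ℓ m0) ∈ Set.range ℓ
    by_cases h : α' i ∈ Set.range ℓ
    · rw [if_pos h]; exact h
    · rw [if_neg h]; exact ⟨m0, rfl⟩
  -- key label lemma: old label equality implies new label equality
  have hT : ∀ s : M ⊕ Fin k, IsDist (sumT τ θ' s) := sumT_isDist hτ hθ'
  have hlab : ∀ s t : M ⊕ Fin k, sumL ℓ α' s = sumL ℓ α' t → sumL ℓ α s = sumL ℓ α t := by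
    intro s t h
    cases s with
    | inl m =>
        cases t with
        | inl m' => exact h
        | inr n =>
            simp only [sumL] at h ⊢
            have : α' n ∈ Set.range ℓ := ⟨m, h⟩
            rw [hα]; simp only [this, if_true]; exact h
    | inr n =>
        cases t with
        | inl m' =>
            simp only [sumL] at h ⊢
            have : α' n ∈ Set.range ℓ := ⟨m', h.symm⟩
            rw [hα]; simp only [this, if_true]; exact h
        | inr n' =>
            simp only [sumL] at h ⊢
            rw [hα]; simp only [h]
  -- feasible set inclusion
  have hsub : {r | ∃ d : (M ⊕ Fin k) → (M ⊕ Fin k) → ℝ,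
        (∀ a b, 0 ≤ d a b ∧ d a b ≤ 1) ∧
        (∀ a b, psi lam (sumT τ θ') (sumL ℓ α') d a b ≤ d a b) ∧
        r = d (Sum.inl m0) (Sum.inr n0)} ⊆
      {r | ∃ d : (M ⊕ Fin k) → (M ⊕ Fin k) → ℝ,
        (∀ a b, 0 ≤ d a b ∧ d a b ≤ 1) ∧
        (∀ a b, psi lam (sumT τ θ') (sumL ℓ α) d a b ≤ d a b) ∧
        r = d (Sum.inl m0) (Sum.inr n0)} := by
    rintro r ⟨d, hd, hfix, rfl⟩
    refine ⟨d, hd, fun a b => ?_, rfl⟩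
    by_cases hnew : sumL ℓ α a = sumL ℓ α b
    · rw [psi, if_pos hnew]
      by_cases hold : sumL ℓ α' a = sumL ℓ α' b
      · have := hfix a b
        rwa [psi, if_pos hold] at this
      · have h1 : (1 : ℝ) ≤ d a b := by
          have := hfix a b
          rwa [psi, if_neg hold] at this
        have hk1 : kant d (sumT τ θ' a) (sumT τ θ' b) ≤ 1 :=
          kant_le_one hd (hT a) (hT b)
        calc lam * kant d (sumT τ θ' a) (sumT τ θ' b)
            ≤ lam * 1 := mul_le_mul_of_nonneg_left hk1 hlam.1.le
          _ ≤ 1 := by linarith [hlam.2]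
          _ ≤ d a b := h1
    · rw [psi, if_neg hnew]
      have hold : sumL ℓ α' a ≠ sumL ℓ α' b := fun h => hnew (hlab a b h)
      have := hfix a b
      rwa [psi, if_neg hold] at this
  -- old set nonempty (constant 1 function)
  have hne : {r | ∃ d : (M ⊕ Fin k) → (M ⊕ Fin k) → ℝ,
        (∀ a b, 0 ≤ d a b ∧ d a b ≤ 1) ∧
        (∀ a b, psi lam (sumT τ θ') (sumL ℓ α') d a b ≤ d a b) ∧
        r = d (Sum.inl m0) (Sum.inr n0)}.Nonempty := by
    refine ⟨1, fun _ _ => 1, fun a b => ⟨zero_le_one, le_refl 1⟩, fun a b => ?_, rfl⟩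
    rw [psi]
    split_ifs with h
    · have hk1 : kant (fun _ _ => (1:ℝ)) (sumT τ θ' a) (sumT τ θ' b) ≤ 1 :=
        kant_le_one (fun _ _ => ⟨zero_le_one, le_refl 1⟩) (hT a) (hT b)
      calc lam * kant (fun _ _ => (1:ℝ)) (sumT τ θ' a) (sumT τ θ' b)
          ≤ lam * 1 := mul_le_mul_of_nonneg_left hk1 hlam.1.le
        _ ≤ 1 := by linarith [hlam.2]
    · exact le_refl 1
  -- new set bounded below by 0
  have hbdd : BddBelow {r | ∃ d : (M ⊕ Fin k) → (M ⊕ Fin k) → ℝ,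
        (∀ a b, 0 ≤ d a b ∧ d a b ≤ 1) ∧
        (∀ a b, psi lam (sumT τ θ') (sumL ℓ α) d a b ≤ d a b) ∧
        r = d (Sum.inl m0) (Sum.inr n0)} := by
    refine ⟨0, fun r hr => ?_⟩
    obtain ⟨d, hd, -, rfl⟩ := hr
    exact (hd _ _).1
  exact csInf_le_csInf hbdd hne hsub
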